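/- Let h > 0, T ≥ 0, and let F : ℝ≥0 → ℝ be continuous with F(0) ∈ [0,h]. If the one-sided upward reflection Γ⁰(F)(t) := F(t) − min(inf_{[0,t]} F, 0) satisfies Γ⁰(F)(t) ≤ h for all t ∈ [0,T], then the two-sided Skorohod reflection satisfies Λ_{0,h}(F)(t) = Γ⁰(F)(t) for all t ∈ [0,T]. -/

import Mathlib

open Set
open scoped NNReal ENNReal

/-- Solution data for the two-sided Skorohod reflection problem of `f` on `[0,h]`:
`c0` and `ch` are the compensators at `0` and at `h`,
and `fun t => f t + ch t + c0 t` is the reflected path `Λ_{0,h}(f)`.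
The support conditions on the measures `dc⁰` and `d(−cʰ)` are phrased as:
the compensator is constant on every (closed) interval on which the reflected
path avoids the corresponding boundary. -/
structure SkorohodPair (h : ℝ) (f c0 ch : ℝ≥0 → ℝ) : Prop where
  cont0 : Continuous c0
  conth : Continuous ch
  init0 : c0 0 = 0
  inith : ch 0 = 0
  mem_Icc : ∀ t, f t + ch t + c0 t ∈ Set.Icc (0 : ℝ) h
  mono0 : Monotone c0
  antih : Antitone ch
  flat0 : ∀ a b : ℝ≥0, a ≤ b → (∀ t ∈ Set.Icc a b, f t + ch t + c0 t ≠ 0) → c0 b = c0 a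
  flath : ∀ a b : ℝ≥0, a ≤ b → (∀ t ∈ Set.Icc a b, f t + ch t + c0 t ≠ h) → ch b = ch a

/-- The one-sided Skorohod reflection of `F` at level `0` (upward push):
`Γ⁰(F)(t) = F t − min (inf_{[0,t]} F) 0`. -/
noncomputable def gammaUp (F : ℝ≥0 → ℝ) (t : ℝ≥0) : ℝ :=
  F t - min (sInf (F '' Set.Icc 0 t)) 0

open Filter
open scoped Topology

namespace TwoSidedAux


variable {F : ℝ≥0 → ℝ}

noncomputable def I (F : ℝ≥0 → ℝ) (t : ℝ≥0) : ℝ := sInf (F '' Set.Icc 0 t)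

lemma ne_img (F : ℝ≥0 → ℝ) (t : ℝ≥0) : (F '' Set.Icc 0 t).Nonempty :=
  (nonempty_Icc.2 ((zero_le : (0:ℝ≥0) ≤ t))).image F

lemma bdd_img (hF : Continuous F) (t : ℝ≥0) : BddBelow (F '' Set.Icc 0 t) :=
  (isCompact_Icc.image hF).bddBelow

lemma I_le (hF : Continuous F) {u t : ℝ≥0} (hu : u ∈ Set.Icc 0 t) : I F t ≤ F u :=
  csInf_le (bdd_img hF t) (mem_image_of_mem F hu)

lemma I_anti (hF : Continuous F) : Antitone (I F) := fun s t hst =>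
  csInf_le_csInf (bdd_img hF t) (ne_img F s) (image_mono (f := F) (Icc_subset_Icc_right hst))

lemma exists_min (hF : Continuous F) (t : ℝ≥0) :
    ∃ u ∈ Set.Icc 0 t, F u = I F t := by
  obtain ⟨u, hu, hmin⟩ := isCompact_Icc.exists_isMinOn (nonempty_Icc.2 ((zero_le : (0:ℝ≥0) ≤ t)))
    hF.continuousOn
  refine ⟨u, hu, le_antisymm ?_ (I_le hF hu)⟩
  refine le_csInf (ne_img F t) ?_
  rintro y ⟨v, hv, rfl⟩
  exact hmin hv

lemma exists_gap (hF : Continuous F) {s t : ℝ≥0} (hst : s ≤ t) :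
    ∃ u ∈ Set.Icc s t, I F s - I F t ≤ F s - F u := by
  obtain ⟨u, hu, hFu⟩ := exists_min hF t
  by_cases hus : u ≤ s
  · refine ⟨s, ⟨le_refl s, hst⟩, ?_⟩
    have h1 : I F s ≤ F u := I_le hF ⟨hu.1, hus⟩
    linarith [hFu]
  · push_neg at hus
    refine ⟨u, ⟨hus.le, hu.2⟩, ?_⟩
    have h1 : I F s ≤ F s := I_le hF ⟨(zero_le : (0:ℝ≥0) ≤ s), le_refl s⟩
    linarith [hFu]

lemma I_cont (hF : Continuous F) : Continuous (I F) := by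
  rw [Metric.continuous_iff]
  intro b ε hε
  obtain ⟨δ, hδ, hδ2⟩ := Metric.continuous_iff.mp hF b (ε/2) (by positivity)
  refine ⟨δ, hδ, fun a ha => ?_⟩
  rcases le_total a b with hab | hab
  · obtain ⟨u, hu, hgap⟩ := exists_gap hF hab
    have hub : dist u b < δ := by
      rw [NNReal.dist_eq] at ha ⊢
      have h1 : (a : ℝ) ≤ u := hu.1
      have h2 : (u : ℝ) ≤ b := hu.2
      have : |(a : ℝ) - b| = b - a := by rw [abs_of_nonpos (by linarith)]; ring
      rw [this] at ha
      rw [abs_of_nonpos (by linarith)]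
      linarith
    have h1 := abs_lt.mp (by rw [← Real.dist_eq]; exact hδ2 a ha)
    have h2 := abs_lt.mp (by rw [← Real.dist_eq]; exact hδ2 u hub)
    have hmono : I F b ≤ I F a := I_anti hF hab
    rw [Real.dist_eq, abs_of_nonneg (by linarith)]
    linarith
  · obtain ⟨u, hu, hgap⟩ := exists_gap hF hab
    have hub : dist u b < δ := by
      rw [NNReal.dist_eq] at ha ⊢
      have h1 : (b : ℝ) ≤ u := hu.1
      have h2 : (u : ℝ) ≤ a := hu.2
      have : |(a : ℝ) - b| = a - b := by rw [abs_of_nonneg (by linarith)]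
      rw [this] at ha
      rw [abs_of_nonneg (by linarith)]
      linarith
    have h2 := abs_lt.mp (by rw [← Real.dist_eq]; exact hδ2 u hub)
    have hmono : I F a ≤ I F b := I_anti hF hab
    rw [Real.dist_eq, abs_of_nonpos (by linarith)]
    linarith

noncomputable def m (F : ℝ≥0 → ℝ) (t : ℝ≥0) : ℝ := -(min (I F t) 0)

lemma gammaUp_eq (t : ℝ≥0) : gammaUp F t = F t + m F t := by
  simp [gammaUp, m, I, sub_eq_add_neg]

lemma m_cont (hF : Continuous F) : Continuous (m F) :=
  ((I_cont hF).min continuous_const).neg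

lemma m_mono (hF : Continuous F) : Monotone (m F) := fun s t hst =>
  neg_le_neg (min_le_min (I_anti hF hst) le_rfl)

lemma m_nonneg (t : ℝ≥0) : 0 ≤ m F t := by
  simp [m]

lemma m_zero (hF0 : 0 ≤ F 0) : m F 0 = 0 := by
  have : I F 0 = F 0 := by simp [I]
  simp [m, this, min_eq_right hF0]

lemma gammaUp_nonneg (hF : Continuous F) (t : ℝ≥0) : 0 ≤ gammaUp F t := by
  have h1 : I F t ≤ F t := I_le hF ⟨(zero_le : (0:ℝ≥0) ≤ t), le_refl t⟩
  have h2 : min (I F t) 0 ≤ I F t := min_le_left _ _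
  simp only [gammaUp]
  change min (sInf (F '' Set.Icc 0 t)) 0 ≤ I F t at h2
  linarith

lemma m_flat (hF : Continuous F) {a b : ℝ≥0} (hab : a ≤ b)
    (hne : ∀ u ∈ Set.Icc a b, gammaUp F u ≠ 0) : m F b = m F a := by
  by_contra hne'
  have hlt : m F a < m F b := lt_of_le_of_ne (m_mono hF hab) (Ne.symm hne')
  have hIb : min (I F b) 0 < min (I F a) 0 := by
    simp only [m] at hlt; linarith
  have hIbneg : I F b < 0 := by
    rcases min_cases (I F b) 0 with ⟨he, _⟩ | ⟨he, hge⟩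
    · have := hIb.trans_le (min_le_right _ _); linarith [he ▸ this]
    · rw [he] at hIb; exact absurd (min_le_right (I F a) 0) (not_le.2 hIb)
  have hminb : min (I F b) 0 = I F b := min_eq_left hIbneg.le
  have hIab : I F b < I F a := by
    have : min (I F a) 0 ≤ I F a := min_le_left _ _
    rw [hminb] at hIb; linarith
  obtain ⟨u, hu, hFu⟩ := exists_min hF b
  have hau : a < u := by
    by_contra hua
    push_neg at hua
    have : I F a ≤ F u := I_le hF ⟨hu.1, hua⟩
    rw [hFu] at this; linarith
  have hIu : I F u = I F b := by
    refine le_antisymm ?_ (I_anti hF hu.2)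
    have := I_le hF (⟨hu.1, le_refl u⟩ : u ∈ Set.Icc 0 u)
    rw [hFu] at this; exact this
  have : gammaUp F u = 0 := by
    simp only [gammaUp]
    change F u - min (I F u) 0 = 0
    rw [hIu, min_eq_left hIbneg.le, hFu, sub_self]
  exact hne u ⟨hau.le, hu.2⟩ this

end TwoSidedAux

open TwoSidedAux in
/-- If the one-sided upward reflection `Γ⁰(F)` stays below `h` on `[0,T]`, then it coincides
with the two-sided Skorohod reflection `Λ_{0,h}(F)` on `[0,T]`. -/
theorem two_sided_eq_one_sided_up
    (h : ℝ) (hh : 0 < h) (T : ℝ≥0) (F : ℝ≥0 → ℝ) (hF : Continuous F)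
    (hF0 : F 0 ∈ Set.Icc (0 : ℝ) h)
    (c0 ch : ℝ≥0 → ℝ) (hp : SkorohodPair h F c0 ch)
    (hle : ∀ t ≤ T, gammaUp F t ≤ h) :
    ∀ t ≤ T, F t + ch t + c0 t = gammaUp F t := by
  intro t ht
  set Δ : ℝ≥0 → ℝ := fun u => c0 u + ch u - m F u with hΔdef
  have hΔcont : Continuous Δ := (hp.cont0.add hp.conth).sub (m_cont hF)
  have hΔ0 : Δ 0 = 0 := by simp [hΔdef, hp.init0, hp.inith, m_zero hF0.1]
  have hLam : ∀ u, F u + ch u + c0 u = gammaUp F u + Δ u := by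
    intro u; rw [gammaUp_eq]; simp only [hΔdef]; ring
  suffices hΔt : Δ t = 0 by
    rw [hLam t, hΔt, add_zero]
  by_contra hne
  rcases lt_or_gt_of_ne hne with hneg | hpos
  · -- Δ t < 0 : use flath and m_flat
    set S : Set ℝ≥0 := Set.Icc 0 t ∩ Δ ⁻¹' (Set.Ici 0) with hSdef
    have hScomp : IsCompact S := isCompact_Icc.inter_right (isClosed_Ici.preimage hΔcont)
    have hSne : (0 : ℝ≥0) ∈ S := ⟨⟨le_refl 0, (zero_le : (0:ℝ≥0) ≤ t)⟩, by simp [hΔ0]⟩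
    set s : ℝ≥0 := sSup S with hsdef
    have hsS : s ∈ S := hScomp.sSup_mem ⟨0, hSne⟩
    have hst : s ≤ t := hsS.1.2
    have hΔs : 0 ≤ Δ s := hsS.2
    have hslt : s < t := hst.lt_of_ne (fun e => by rw [e] at hΔs; linarith)
    have hmid : ∀ u, s < u → u ≤ t → Δ u < 0 := by
      intro u hsu hut
      by_contra hge
      push_neg at hge
      have : u ∈ S := ⟨⟨(zero_le : (0:ℝ≥0) ≤ u), hut⟩, hge⟩
      exact absurd (le_csSup hScomp.bddAbove this) (not_le.2 hsu)
    have key : ∀ s', s < s' → s' ≤ t → Δ s' ≤ Δ t := by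
      intro s' h1 h2
      have hch : ch t = ch s' := by
        refine hp.flath s' t h2 (fun u hu => ?_)
        have hΔu : Δ u < 0 := hmid u (h1.trans_le hu.1) hu.2
        have hΓ : gammaUp F u ≤ h := hle u (hu.2.trans ht)
        rw [hLam u]; linarith
      have hm : m F t = m F s' := by
        refine m_flat hF h2 (fun u hu => ?_)
        have hΔu : Δ u < 0 := hmid u (h1.trans_le hu.1) hu.2
        have h0 : 0 ≤ F u + ch u + c0 u := (hp.mem_Icc u).1
        rw [hLam u] at h0
        exact ne_of_gt (by linarith)
      have hc0 : c0 s' ≤ c0 t := hp.mono0 h2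
      simp only [hΔdef]
      rw [hch, hm] at *
      linarith
    have htend : Tendsto Δ (𝓝[>] s) (𝓝 (Δ s)) :=
      (hΔcont.tendsto s).mono_left nhdsWithin_le_nhds
    have hev : ∀ᶠ s' in 𝓝[>] s, Δ s' ≤ Δ t := by
      filter_upwards [Ioc_mem_nhdsGT_of_mem ⟨le_refl s, hslt⟩] with s' hs'
      exact key s' hs'.1 hs'.2
    have : Δ s ≤ Δ t := le_of_tendsto htend hev
    have := hmid t hslt le_rfl
    linarith
  · -- Δ t > 0 : use flat0
    set S : Set ℝ≥0 := Set.Icc 0 t ∩ Δ ⁻¹' (Set.Iic 0) with hSdef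
    have hScomp : IsCompact S := isCompact_Icc.inter_right (isClosed_Iic.preimage hΔcont)
    have hSne : (0 : ℝ≥0) ∈ S := ⟨⟨le_refl 0, (zero_le : (0:ℝ≥0) ≤ t)⟩, by simp [hΔ0]⟩
    set s : ℝ≥0 := sSup S with hsdef
    have hsS : s ∈ S := hScomp.sSup_mem ⟨0, hSne⟩
    have hst : s ≤ t := hsS.1.2
    have hΔs : Δ s ≤ 0 := hsS.2
    have hslt : s < t := hst.lt_of_ne (fun e => by rw [e] at hΔs; linarith)
    have hmid : ∀ u, s < u → u ≤ t → 0 < Δ u := by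
      intro u hsu hut
      by_contra hge
      push_neg at hge
      have : u ∈ S := ⟨⟨(zero_le : (0:ℝ≥0) ≤ u), hut⟩, hge⟩
      exact absurd (le_csSup hScomp.bddAbove this) (not_le.2 hsu)
    have key : ∀ s', s < s' → s' ≤ t → Δ t ≤ Δ s' := by
      intro s' h1 h2
      have hc0 : c0 t = c0 s' := by
        refine hp.flat0 s' t h2 (fun u hu => ?_)
        have hΔu : 0 < Δ u := hmid u (h1.trans_le hu.1) hu.2
        have hΓ : 0 ≤ gammaUp F u := gammaUp_nonneg hF u
        rw [hLam u]
        exact ne_of_gt (by linarith)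
      have hch : ch t ≤ ch s' := hp.antih h2
      have hm : m F s' ≤ m F t := m_mono hF h2
      simp only [hΔdef]
      rw [hc0]
      linarith
    have htend : Tendsto Δ (𝓝[>] s) (𝓝 (Δ s)) :=
      (hΔcont.tendsto s).mono_left nhdsWithin_le_nhds
    have hev : ∀ᶠ s' in 𝓝[>] s, Δ t ≤ Δ s' := by
      filter_upwards [Ioc_mem_nhdsGT_of_mem ⟨le_refl s, hslt⟩] with s' hs'
      exact key s' hs'.1 hs'.2
    have : Δ t ≤ Δ s := ge_of_tendsto htend hev
    linarith
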